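/- Let A : ℝ^m → ℝ^m be an orthogonal linear map, b ∈ ℝ^m, and let f(x) = A x + b. Let P denote the orthogonal projection of ℝ^m onto the fixed space ker(A − 1) = {x : A x = x}. Then the infimum of ‖f(x) − x‖ over x ∈ ℝ^m equals ‖P b‖ and is attained; the set of minimizers P_f = {x : ‖f(x) − x‖ is minimal} is the nonempty affine subspace {x ∈ ℝ^m : (A − 1)x = P b − b}, which is a translate of ker(A − 1); and f maps P_f into itself, acting on it as the translation x ↦ x + P b. In particular, if f has no fixed point then P b ≠ 0, and P_f is a union of straight lines in the direction P b on each of which f acts by translation. -/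

import Mathlib

noncomputable section

open Submodule RealInnerProductSpace

/-- for `f(x) = A x + b` with `A` an orthogonal linear map of `ℝ^m` and
`P` the orthogonal projection onto `ker (A - 1)`: the infimum of `‖f x - x‖` is `‖P b‖`
and is attained; the minimizing set `P_f` equals `{x : (A - 1) x = P b - b}`, is a
nonempty translate of `ker (A - 1)`, is mapped into itself by `f`, on which `f` acts as
translation by `P b`; and if `f` has no fixed point, then `P b ≠ 0`. -/
theorem affine_isometry_min_displacement (m : ℕ)
    (A : EuclideanSpace ℝ (Fin m) ≃ₗᵢ[ℝ] EuclideanSpace ℝ (Fin m))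
    (b : EuclideanSpace ℝ (Fin m)) :
    letI K : Submodule ℝ (EuclideanSpace ℝ (Fin m)) :=
      LinearMap.ker (A.toLinearEquiv.toLinearMap -
        (LinearMap.id : EuclideanSpace ℝ (Fin m) →ₗ[ℝ] _))
    letI Pb : EuclideanSpace ℝ (Fin m) := (K.orthogonalProjectionOnto b : EuclideanSpace ℝ (Fin m))
    letI Pf : Set (EuclideanSpace ℝ (Fin m)) :=
      {x | ∀ y, ‖A x + b - x‖ ≤ ‖A y + b - y‖}
    IsLeast (Set.range fun x => ‖A x + b - x‖) ‖Pb‖ ∧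
    Pf = {x | A x - x = Pb - b} ∧
    Pf.Nonempty ∧
    (∃ x₀, Pf = (fun v => x₀ + v) '' (K : Set (EuclideanSpace ℝ (Fin m)))) ∧
    (∀ x ∈ Pf, A x + b = x + Pb ∧ A x + b ∈ Pf) ∧
    ((∀ x, A x + b ≠ x) → Pb ≠ 0) := by
  set T : EuclideanSpace ℝ (Fin m) →ₗ[ℝ] EuclideanSpace ℝ (Fin m) := A.toLinearEquiv.toLinearMap - LinearMap.id with hT
  set K : Submodule ℝ (EuclideanSpace ℝ (Fin m)) := LinearMap.ker T with hK
  set Pb : EuclideanSpace ℝ (Fin m) := (orthogonalProjection K b : EuclideanSpace ℝ (Fin m)) with hPb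
  have hTapp : ∀ x : EuclideanSpace ℝ (Fin m), T x = A x - x := by
    intro x; simp [hT, LinearMap.sub_apply]
  -- T x ∈ Kᗮ
  have hTK : ∀ x : EuclideanSpace ℝ (Fin m), T x ∈ Kᗮ := by
    intro x
    rw [Submodule.mem_orthogonal]
    intro u hu
    have hu' : A u = u := by
      have := (LinearMap.mem_ker).mp hu
      have := hTapp u ▸ this
      linear_combination (norm := module) this
    have : ⟪u, A x⟫ = ⟪u, x⟫ := by
      conv_lhs => rw [← hu']
      exact A.inner_map_map u x
    rw [hTapp]
    rw [inner_sub_right, this, sub_self]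
  -- range T = Kᗮ
  have hrange : LinearMap.range T = Kᗮ := by
    apply Submodule.eq_of_le_of_finrank_eq
    · rintro _ ⟨x, rfl⟩; exact hTK x
    · have h1 := LinearMap.finrank_range_add_finrank_ker T
      have h2 := Submodule.finrank_add_finrank_orthogonal (K := K)
      rw [← hK] at h1
      omega
  have hbPb : b - Pb ∈ Kᗮ := sub_starProjection_mem_orthogonal (K := K) b
  have hPbK : Pb ∈ K := (orthogonalProjection K b).2
  -- key identity
  have key : ∀ x : EuclideanSpace ℝ (Fin m), ‖A x + b - x‖ ^ 2 = ‖T x + (b - Pb)‖ ^ 2 + ‖Pb‖ ^ 2 := by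
    intro x
    have hdecomp : A x + b - x = (T x + (b - Pb)) + Pb := by
      rw [hTapp]; abel
    have hmem : T x + (b - Pb) ∈ Kᗮ := Kᗮ.add_mem (hTK x) hbPb
    have hinner : ⟪T x + (b - Pb), Pb⟫ = 0 := by
      rw [real_inner_comm]; exact hmem Pb hPbK
    rw [hdecomp, norm_add_sq_real, hinner]
    ring
  -- existence of minimizer
  obtain ⟨x₀, hx₀⟩ : ∃ x₀ : EuclideanSpace ℝ (Fin m), T x₀ = Pb - b := by
    have : Pb - b ∈ Kᗮ := by
      have := Kᗮ.neg_mem hbPb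
      simpa using this
    rw [← hrange] at this
    exact this
  have hx₀norm : ‖A x₀ + b - x₀‖ = ‖Pb‖ := by
    have h := key x₀
    rw [hx₀] at h
    have h0 : Pb - b + (b - Pb) = (0 : EuclideanSpace ℝ (Fin m)) := by abel
    rw [h0, norm_zero] at h
    have h' : ‖A x₀ + b - x₀‖ ^ 2 = ‖Pb‖ ^ 2 := by linarith
    nlinarith [norm_nonneg (A x₀ + b - x₀), norm_nonneg Pb]
  have hlb : ∀ x : EuclideanSpace ℝ (Fin m), ‖Pb‖ ≤ ‖A x + b - x‖ := by
    intro x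
    nlinarith [key x, norm_nonneg (A x + b - x), norm_nonneg Pb,
      sq_nonneg ‖T x + (b - Pb)‖]
  -- characterize Pf
  have hPf : {x : EuclideanSpace ℝ (Fin m) | ∀ y, ‖A x + b - x‖ ≤ ‖A y + b - y‖} = {x : EuclideanSpace ℝ (Fin m) | A x - x = Pb - b} := by
    ext x
    simp only [Set.mem_setOf_eq]
    constructor
    · intro hx
      have h1 : ‖A x + b - x‖ = ‖Pb‖ := le_antisymm (hx₀norm ▸ hx x₀) (hlb x)
      have h2 : ‖T x + (b - Pb)‖ ^ 2 = 0 := by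
        have := key x
        rw [h1] at this
        linarith
      have h3 : T x + (b - Pb) = 0 := by
        have hn : ‖T x + (b - Pb)‖ = 0 := by nlinarith [norm_nonneg (T x + (b - Pb))]
        exact norm_eq_zero.mp hn
      rw [hTapp] at h3
      linear_combination (norm := module) h3
    · intro hx
      intro y
      have hxn : ‖A x + b - x‖ = ‖Pb‖ := by
        have : A x + b - x = Pb := by linear_combination (norm := module) hx
        rw [this]
      rw [hxn]; exact hlb y
  refine ⟨⟨⟨x₀, hx₀norm⟩, ?_⟩, hPf, ?_, ?_, ?_, ?_⟩
  · rintro r ⟨x, rfl⟩; exact hlb x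
  · refine ⟨x₀, ?_⟩
    rw [hPf]
    rw [hTapp] at hx₀
    exact hx₀
  · refine ⟨x₀, ?_⟩
    rw [hPf]
    ext x
    simp only [Set.mem_setOf_eq, Set.mem_image, SetLike.mem_coe]
    constructor
    · intro hx
      refine ⟨x - x₀, ?_, by abel⟩
      rw [LinearMap.mem_ker, map_sub, hx₀, hTapp]
      rw [hTapp] at hx₀
      linear_combination (norm := module) hx
    · rintro ⟨v, hv, rfl⟩
      have hv' : A v = v := by
        have := (LinearMap.mem_ker).mp hv
        rw [hTapp] at this
        linear_combination (norm := module) this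
      rw [hTapp] at hx₀
      rw [map_add, hv']
      linear_combination (norm := module) hx₀
  · intro x hx
    rw [hPf] at hx
    simp only [Set.mem_setOf_eq] at hx
    have hfx : A x + b = x + Pb := by linear_combination (norm := module) hx
    refine ⟨hfx, ?_⟩
    rw [hPf]
    simp only [Set.mem_setOf_eq]
    have hAPb : A Pb = Pb := by
      have := (LinearMap.mem_ker).mp hPbK
      rw [hTapp] at this
      linear_combination (norm := module) this
    rw [hfx, map_add, hAPb]
    linear_combination (norm := module) hx
  · intro hnf hPb0
    rw [hTapp, hPb0] at hx₀
    exact hnf x₀ (by linear_combination (norm := module) hx₀)
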